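/- For m > 0 and b⃗ ∈ ℝ³ \ {0}, t⃗, a⃗ ∈ ℝ³, define the charge map Ψ(m, b⃗, t⃗, a⃗) ∈ ℝ¹⁰ as 4πm times the vector with components: cosh|b⃗|; sinh|b⃗|·(b⃗/|b⃗|); cosh|b⃗|·t⃗ + sinh|b⃗|·(a⃗ × b⃗/|b⃗|); and cosh|b⃗|·(a⃗ − (a⃗·b̂)b̂) + (a⃗·b̂)b̂ − sinh|b⃗|·(t⃗ × b̂), where b̂ = b⃗/|b⃗|. Define φ₀ on vectors (m', b⃗', t⃗', a⃗') with 0 < |b⃗'| < m' by: mass component (1/4π)√((m')² − |b⃗'|²); boost component arctanh(|b⃗'|/m')·(b⃗'/|b⃗'|); translation component ((m')² − |b⃗'|²)⁻¹ (m' t⃗' − a⃗' × b⃗' − (1/m')(b⃗'·t⃗')b⃗'); rotation component ((m')² − |b⃗'|²)⁻¹ ( m'( a⃗' − (1 − √((m')² − |b⃗'|²)/m')(a⃗'·b̂')b̂' ) − b⃗' × t⃗' ) with b̂' = b⃗'/|b⃗'|. Then Ψ(φ₀(m', b⃗', t⃗', a⃗')) = (m', b⃗', t⃗', a⃗'), i.e.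 φ₀ is a right inverse of Ψ on its domain. -/

import Mathlib

noncomputable section
open Matrix

/-- Euclidean norm of a vector in `ℝ³`. -/
def norm3 (v : Fin 3 → ℝ) : ℝ := Real.sqrt (v ⬝ᵥ v)

/-- Inverse hyperbolic tangent. -/
def artanh (s : ℝ) : ℝ := (1 / 2) * Real.log ((1 + s) / (1 - s))

/-- Mass component of the charge map `Ψ`: `4πm·cosh|b|`. -/
def chargeMass (m : ℝ) (b : Fin 3 → ℝ) : ℝ :=
  4 * Real.pi * m * Real.cosh (norm3 b)

/-- Boost component of the charge map `Ψ`: `4πm·sinh|b|·(b/|b|)`. -/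
def chargeBoost (m : ℝ) (b : Fin 3 → ℝ) : Fin 3 → ℝ :=
  (4 * Real.pi * m * Real.sinh (norm3 b) / norm3 b) • b

/-- Translation component of `Ψ`: `4πm(cosh|b|·t + sinh|b|·(a × b̂))`. -/
def chargeTrans (m : ℝ) (b t a : Fin 3 → ℝ) : Fin 3 → ℝ :=
  (4 * Real.pi * m) •
    (Real.cosh (norm3 b) • t + (Real.sinh (norm3 b) / norm3 b) • (crossProduct a b))

/-- Rotation component of `Ψ`:
`4πm(cosh|b|·(a − (a·b̂)b̂) + (a·b̂)b̂ − sinh|b|·(t × b̂))`. -/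
def chargeRot (m : ℝ) (b t a : Fin 3 → ℝ) : Fin 3 → ℝ :=
  (4 * Real.pi * m) •
    (Real.cosh (norm3 b) • (a - ((a ⬝ᵥ b) / (norm3 b) ^ 2) • b)
      + ((a ⬝ᵥ b) / (norm3 b) ^ 2) • b
      - (Real.sinh (norm3 b) / norm3 b) • (crossProduct t b))

/-- Mass component of `φ₀`: `(1/4π)√((m')² − |b'|²)`. -/
def phiMass (m' : ℝ) (b' : Fin 3 → ℝ) : ℝ :=
  Real.sqrt (m' ^ 2 - (norm3 b') ^ 2) / (4 * Real.pi)

/-- Boost component of `φ₀`: `arctanh(|b'|/m')·(b'/|b'|)`. -/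
def phiBoost (m' : ℝ) (b' : Fin 3 → ℝ) : Fin 3 → ℝ :=
  (artanh (norm3 b' / m') / norm3 b') • b'

/-- Translation component of `φ₀`:
`((m')² − |b'|²)⁻¹ (m' t' − a' × b' − (1/m')(b'·t')b')`. -/
def phiTrans (m' : ℝ) (b' t' a' : Fin 3 → ℝ) : Fin 3 → ℝ :=
  (m' ^ 2 - (norm3 b') ^ 2)⁻¹ •
    (m' • t' - crossProduct a' b' - (m'⁻¹ * (b' ⬝ᵥ t')) • b')

/-- Rotation component of `φ₀`:
`((m')² − |b'|²)⁻¹ (m'(a' − (1 − √((m')²−|b'|²)/m')(a'·b̂')b̂') − b' × t')`. -/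
def phiRot (m' : ℝ) (b' t' a' : Fin 3 → ℝ) : Fin 3 → ℝ :=
  (m' ^ 2 - (norm3 b') ^ 2)⁻¹ •
    (m' • (a' - ((1 - Real.sqrt (m' ^ 2 - (norm3 b') ^ 2) / m')
        * ((a' ⬝ᵥ b') / (norm3 b') ^ 2)) • b')
      - crossProduct b' t')

lemma cross_smul_left' (c : ℝ) (u v : Fin 3 → ℝ) :
    crossProduct (c • u) v = c • crossProduct u v := by
  ext i; fin_cases i <;> simp [cross_apply] <;> ring

lemma cross_smul_right' (c : ℝ) (u v : Fin 3 → ℝ) :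
    crossProduct u (c • v) = c • crossProduct u v := by
  ext i; fin_cases i <;> simp [cross_apply] <;> ring

lemma cross_sub_left' (u v w : Fin 3 → ℝ) :
    crossProduct (u - v) w = crossProduct u w - crossProduct v w := by
  ext i; fin_cases i <;> simp [cross_apply] <;> ring

lemma cross_tri1 (b t : Fin 3 → ℝ) :
    crossProduct (crossProduct b t) b = (b ⬝ᵥ b) • t - (b ⬝ᵥ t) • b := by
  ext i; fin_cases i <;> simp [cross_apply, dotProduct, Fin.sum_univ_three] <;> ring

lemma cross_tri2 (a b : Fin 3 → ℝ) :
    crossProduct (crossProduct a b) b = (b ⬝ᵥ a) • b - (b ⬝ᵥ b) • a := by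
  ext i; fin_cases i <;> simp [cross_apply, dotProduct, Fin.sum_univ_three] <;> ring

lemma cross_dot_self' (b t : Fin 3 → ℝ) : (crossProduct b t) ⬝ᵥ b = 0 := by
  simp [cross_apply, dotProduct, Fin.sum_univ_three]; ring

lemma exp_artanh (m β : ℝ) (h0 : 0 < β) (hmb : β < m) :
    Real.exp (artanh (β / m)) = Real.sqrt (m ^ 2 - β ^ 2) / (m - β) := by
  have hm : 0 < m := h0.trans hmb
  have hmb' : 0 < m - β := by linarith
  have hu : (0:ℝ) < (1 + β / m) / (1 - β / m) := by
    apply div_pos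
    · positivity
    · rw [sub_pos, div_lt_one hm]; exact hmb
  have hμ : 0 < Real.sqrt (m ^ 2 - β ^ 2) := Real.sqrt_pos.mpr (by nlinarith)
  have hsq : (Real.exp (artanh (β / m))) ^ 2 = (Real.sqrt (m ^ 2 - β ^ 2) / (m - β)) ^ 2 := by
    have h1 : (Real.exp (artanh (β / m))) ^ 2 = Real.exp (2 * artanh (β / m)) := by
      rw [sq, ← Real.exp_add]; ring_nf
    rw [h1, artanh, show 2 * ((1/2) * Real.log ((1 + β / m) / (1 - β / m)))
        = Real.log ((1 + β / m) / (1 - β / m)) by ring, Real.exp_log hu,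
      div_pow, Real.sq_sqrt (by nlinarith : (0:ℝ) ≤ m ^ 2 - β ^ 2)]
    field_simp
    ring
  nlinarith [Real.exp_pos (artanh (β / m)), hsq, div_pos hμ hmb']

lemma cosh_artanh (m β : ℝ) (h0 : 0 < β) (hmb : β < m) :
    Real.cosh (artanh (β / m)) = m / Real.sqrt (m ^ 2 - β ^ 2) := by
  have hm : 0 < m := h0.trans hmb
  have hmb' : 0 < m - β := by linarith
  have hμ : 0 < Real.sqrt (m ^ 2 - β ^ 2) := Real.sqrt_pos.mpr (by nlinarith)
  have hμ2 : Real.sqrt (m ^ 2 - β ^ 2) ^ 2 = m ^ 2 - β ^ 2 :=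
    Real.sq_sqrt (by nlinarith)
  rw [Real.cosh_eq, Real.exp_neg, exp_artanh m β h0 hmb]
  field_simp
  linear_combination hμ2

lemma sinh_artanh (m β : ℝ) (h0 : 0 < β) (hmb : β < m) :
    Real.sinh (artanh (β / m)) = β / Real.sqrt (m ^ 2 - β ^ 2) := by
  have hm : 0 < m := h0.trans hmb
  have hmb' : 0 < m - β := by linarith
  have hμ : 0 < Real.sqrt (m ^ 2 - β ^ 2) := Real.sqrt_pos.mpr (by nlinarith)
  have hμ2 : Real.sqrt (m ^ 2 - β ^ 2) ^ 2 = m ^ 2 - β ^ 2 :=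
    Real.sq_sqrt (by nlinarith)
  rw [Real.sinh_eq, Real.exp_neg, exp_artanh m β h0 hmb]
  field_simp
  linear_combination hμ2

/-- For `m' > 0` and `0 < |b'| < m'`, the map `φ₀` is a right inverse of
the charge map `Ψ`: `Ψ(φ₀(m', b', t', a')) = (m', b', t', a')`, componentwise. -/
theorem stmt_10 (m' : ℝ) (b' t' a' : Fin 3 → ℝ)
    (hm : 0 < m') (hb0 : 0 < norm3 b') (hbm : norm3 b' < m') :
    chargeMass (phiMass m' b') (phiBoost m' b') = m' ∧
    chargeBoost (phiMass m' b') (phiBoost m' b') = b' ∧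
    chargeTrans (phiMass m' b') (phiBoost m' b')
      (phiTrans m' b' t' a') (phiRot m' b' t' a') = t' ∧
    chargeRot (phiMass m' b') (phiBoost m' b')
      (phiTrans m' b' t' a') (phiRot m' b' t' a') = a' := by
  have hπ : Real.pi ≠ 0 := Real.pi_ne_zero
  have hnn : (0:ℝ) ≤ b' ⬝ᵥ b' :=
    Finset.sum_nonneg fun i _ => mul_self_nonneg (b' i)
  have hdot : b' ⬝ᵥ b' = (norm3 b') ^ 2 := (Real.sq_sqrt hnn).symm
  have hD : 0 < m' ^ 2 - (norm3 b') ^ 2 := by nlinarith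
  have hμ : 0 < Real.sqrt (m' ^ 2 - (norm3 b') ^ 2) := Real.sqrt_pos.mpr hD
  have hμ2 : Real.sqrt (m' ^ 2 - (norm3 b') ^ 2) ^ 2 = m' ^ 2 - (norm3 b') ^ 2 :=
    Real.sq_sqrt hD.le
  have hr : 0 < artanh (norm3 b' / m') := by
    rw [artanh]
    apply mul_pos (by norm_num)
    apply Real.log_pos
    rw [lt_div_iff₀ (by rw [sub_pos, div_lt_one hm]; exact hbm)]
    have h1 : 0 < norm3 b' / m' := div_pos hb0 hm
    linarith
  have hVdef : phiBoost m' b' = (artanh (norm3 b' / m') / norm3 b') • b' := rfl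
  have hcosh := cosh_artanh m' (norm3 b') hb0 hbm
  have hsinh := sinh_artanh m' (norm3 b') hb0 hbm
  have hnV : norm3 (phiBoost m' b') = artanh (norm3 b' / m') := by
    rw [hVdef, norm3, smul_dotProduct, dotProduct_smul, hdot, smul_eq_mul, smul_eq_mul,
      show artanh (norm3 b' / m') / norm3 b' *
          (artanh (norm3 b' / m') / norm3 b' * norm3 b' ^ 2) = (artanh (norm3 b' / m')) ^ 2 by
        field_simp,
      Real.sqrt_sq hr.le]
  refine ⟨?_, ?_, ?_, ?_⟩
  · -- mass
    simp only [chargeMass, phiMass, hnV, hcosh]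
    field_simp
  · -- boost
    simp only [chargeBoost, phiMass]
    rw [hnV, hsinh, hVdef, smul_smul]
    rw [show 4 * Real.pi * (Real.sqrt (m' ^ 2 - norm3 b' ^ 2) / (4 * Real.pi)) *
        (norm3 b' / Real.sqrt (m' ^ 2 - norm3 b' ^ 2)) / artanh (norm3 b' / m') *
        (artanh (norm3 b' / m') / norm3 b') = 1 by
      field_simp, one_smul]
  · -- translation
    have key : m' • phiTrans m' b' t' a' + crossProduct (phiRot m' b' t' a') b' = t' := by
      simp only [phiTrans, phiRot, cross_smul_left', cross_sub_left', cross_self,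
        smul_zero, sub_zero, cross_tri1, hdot]
      match_scalars <;> field_simp <;> ring
    calc chargeTrans (phiMass m' b') (phiBoost m' b')
          (phiTrans m' b' t' a') (phiRot m' b' t' a')
        = m' • phiTrans m' b' t' a' + crossProduct (phiRot m' b' t' a') b' := by
          simp only [chargeTrans, phiMass]
          rw [hnV, hcosh, hsinh, hVdef, cross_smul_right']
          match_scalars <;> (field_simp; try ring)
      _ = t' := key
  · -- rotation
    have hAb : phiRot m' b' t' a' ⬝ᵥ b' =
        (m' ^ 2 - (norm3 b') ^ 2)⁻¹ *
          (Real.sqrt (m' ^ 2 - (norm3 b') ^ 2) * (a' ⬝ᵥ b')) := by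
      simp only [phiRot, smul_dotProduct, sub_dotProduct, smul_eq_mul,
        cross_dot_self', hdot]
      field_simp
      ring
    have hPV : ((phiRot m' b' t' a' ⬝ᵥ phiBoost m' b') / (artanh (norm3 b' / m')) ^ 2)
          • phiBoost m' b'
        = ((m' ^ 2 - (norm3 b') ^ 2)⁻¹ *
            (Real.sqrt (m' ^ 2 - (norm3 b') ^ 2) * (a' ⬝ᵥ b')) / (norm3 b') ^ 2) • b' := by
      rw [hVdef, dotProduct_smul, hAb, smul_smul, smul_eq_mul]
      congr 1
      field_simp
    have key : m' • (phiRot m' b' t' a'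
          - ((m' ^ 2 - (norm3 b') ^ 2)⁻¹ *
            (Real.sqrt (m' ^ 2 - (norm3 b') ^ 2) * (a' ⬝ᵥ b')) / (norm3 b') ^ 2) • b')
        + Real.sqrt (m' ^ 2 - (norm3 b') ^ 2) •
          (((m' ^ 2 - (norm3 b') ^ 2)⁻¹ *
            (Real.sqrt (m' ^ 2 - (norm3 b') ^ 2) * (a' ⬝ᵥ b')) / (norm3 b') ^ 2) • b')
        - crossProduct (phiTrans m' b' t' a') b' = a' := by
      simp only [phiTrans, phiRot, cross_smul_left', cross_sub_left', cross_self,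
        smul_zero, sub_zero, cross_tri2, hdot,
        show crossProduct t' b' = -(crossProduct b' t') from (cross_anticomm b' t').symm,
        dotProduct_comm b' a']
      set β := norm3 b' with hβd
      set S := Real.sqrt (m' ^ 2 - β ^ 2) with hSd
      set j := a' ⬝ᵥ b' with hjd
      set κ := b' ⬝ᵥ t' with hκd
      match_scalars <;> field_simp <;> (try ring)
      linear_combination j * hμ2
    calc chargeRot (phiMass m' b') (phiBoost m' b')
          (phiTrans m' b' t' a') (phiRot m' b' t' a')
        = m' • (phiRot m' b' t' a'
            - ((m' ^ 2 - (norm3 b') ^ 2)⁻¹ *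
              (Real.sqrt (m' ^ 2 - (norm3 b') ^ 2) * (a' ⬝ᵥ b')) / (norm3 b') ^ 2) • b')
          + Real.sqrt (m' ^ 2 - (norm3 b') ^ 2) •
            (((m' ^ 2 - (norm3 b') ^ 2)⁻¹ *
              (Real.sqrt (m' ^ 2 - (norm3 b') ^ 2) * (a' ⬝ᵥ b')) / (norm3 b') ^ 2) • b')
          - crossProduct (phiTrans m' b' t' a') b' := by
          simp only [chargeRot, phiMass]
          rw [hnV, hcosh, hsinh, hPV, hVdef, cross_smul_right']
          match_scalars <;> (field_simp; try ring)
      _ = a' := key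

end
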